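/- arXiv:2507.19967 — 2 statements merged into one kernel-verified Lean document; each statement's English description precedes it below -/
import Mathlib

section
/- Let (X, d) be a metric space, F : X → X a 1-Lipschitz map, z0 ∈ X, and let (n_k) be a record sequence for n ↦ d(F^n(z0), z0). Let (m_k) be a sequence with m_k ≤ n_k for all k. Suppose for each k there is a point w_k ∈ X lying on a geodesic segment from F^{n_k}(z0) to F^{m_k}(z0), meaning d(F^{m_k}(z0), F^{n_k}(z0)) = d(F^{m_k}(z0), w_k) + d(w_k, F^{n_k}(z0)), and suppose d(z0, w_k) ≤ C for all k. Then d(F^{m_k}(z0), w_k) ≤ C for all k; in particular d(F^{m_k}(z0), z0) ≤ 2C for all k. -/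
theorem bharali_maitra_core {X : Type*} [MetricSpace X] (F : X → X)
    (hF : ∀ x y : X, dist (F x) (F y) ≤ dist x y) (z0 : X) (nk mk : ℕ → ℕ)
    (hrec : ∀ k, ∀ m ≤ nk k, dist (F^[m] z0) z0 ≤ dist (F^[nk k] z0) z0)
    (hm : ∀ k, mk k ≤ nk k) (w : ℕ → X) (C : ℝ)
    (hgeo : ∀ k, dist (F^[mk k] z0) (F^[nk k] z0)
        = dist (F^[mk k] z0) (w k) + dist (w k) (F^[nk k] z0))
    (hw : ∀ k, dist z0 (w k) ≤ C) :
    (∀ k, dist (F^[mk k] z0) (w k) ≤ C) ∧ ∀ k, dist (F^[mk k] z0) z0 ≤ 2 * C := by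
  have hiter : ∀ (m : ℕ) (x y : X), dist (F^[m] x) (F^[m] y) ≤ dist x y := by
    intro m
    induction m with
    | zero => simp
    | succ n ih =>
      intro x y
      rw [Function.iterate_succ_apply', Function.iterate_succ_apply']
      exact (hF _ _).trans (ih x y)
  have key : ∀ k, dist (F^[mk k] z0) (w k) ≤ C := by
    intro k
    have h1 : dist (F^[mk k] z0) (F^[nk k] z0) ≤ dist (F^[nk k] z0) z0 := by
      have : F^[nk k] z0 = F^[mk k] (F^[nk k - mk k] z0) := by
        rw [← Function.iterate_add_apply, Nat.add_sub_cancel' (hm k)]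
      calc dist (F^[mk k] z0) (F^[nk k] z0)
          = dist (F^[mk k] z0) (F^[mk k] (F^[nk k - mk k] z0)) := by rw [← this]
        _ ≤ dist z0 (F^[nk k - mk k] z0) := hiter _ _ _
        _ = dist (F^[nk k - mk k] z0) z0 := dist_comm _ _
        _ ≤ dist (F^[nk k] z0) z0 := hrec k _ (Nat.sub_le _ _)
    have h2 : dist (F^[nk k] z0) z0 - dist z0 (w k) ≤ dist (w k) (F^[nk k] z0) := by
      have := dist_triangle (F^[nk k] z0) (w k) z0
      linarith [dist_comm (F^[nk k] z0) (w k), dist_comm (w k) z0]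
    have := hgeo k
    linarith [hw k]
  refine ⟨key, fun k => ?_⟩
  calc dist (F^[mk k] z0) z0 ≤ dist (F^[mk k] z0) (w k) + dist (w k) z0 := dist_triangle _ _ _
    _ ≤ C + C := add_le_add (key k) (by rw [dist_comm]; exact hw k)
    _ = 2 * C := by ring
end

section
/- Equip the polydisc 𝔻^N with the distance k_{𝔻^N}(z,w) = max_{1≤j≤N} k_𝔻(z_j, w_j), where k_𝔻 is the Poincaré distance. Let F : 𝔻^N → 𝔻^N be 1-Lipschitz for k_{𝔻^N}, let p, q ∈ 𝔻^N, and suppose π_1(F^{∘n}(p)) → 1 as n → ∞, where π_1 is the projection to the first coordinate. Then π_1(F^{∘n}(q)) → 1 as n → ∞. -/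
/-- `artanh x = (1/2) log((1+x)/(1-x))`. -/
noncomputable def artanh (x : ℝ) : ℝ := (1 / 2) * Real.log ((1 + x) / (1 - x))

/-- The Poincaré distance on the unit disc. -/
noncomputable def kD (z w : ℂ) : ℝ :=
  artanh (‖z - w‖ / ‖1 - (starRingEnd ℂ) z * w‖)

/-- The Kobayashi distance of the polydisc: max of the coordinatewise
Poincaré distances. -/
noncomputable def kPoly {N : ℕ} [NeZero N] (z w : Fin N → ℂ) : ℝ :=
  Finset.univ.sup' (by simp [Finset.univ_nonempty]) fun j => kD (z j) (w j)

lemma normSq_identity (z w : ℂ) :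
    Complex.normSq (1 - (starRingEnd ℂ) z * w) - Complex.normSq (z - w)
      = (1 - Complex.normSq z) * (1 - Complex.normSq w) := by
  simp only [Complex.normSq_apply, Complex.sub_re, Complex.sub_im, Complex.mul_re,
    Complex.mul_im, Complex.conj_re, Complex.conj_im, Complex.one_re, Complex.one_im]
  ring

lemma pseudo_lt_one {z w : ℂ} (hz : ‖z‖ < 1) (hw : ‖w‖ < 1) :
    ‖z - w‖ < ‖1 - (starRingEnd ℂ) z * w‖ := by
  have hz2 : Complex.normSq z < 1 := by
    have := Complex.sq_norm z; nlinarith [norm_nonneg z]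
  have hw2 : Complex.normSq w < 1 := by
    have := Complex.sq_norm w; nlinarith [norm_nonneg w]
  have h := normSq_identity z w
  have h1 : Complex.normSq (z - w) < Complex.normSq (1 - (starRingEnd ℂ) z * w) := by
    nlinarith
  have := Complex.sq_norm (z - w)
  have := Complex.sq_norm (1 - (starRingEnd ℂ) z * w)
  nlinarith [norm_nonneg (z - w), norm_nonneg (1 - (starRingEnd ℂ) z * w)]

/-- Bounded Poincaré distance forces comparable distance to the boundary point 1. -/
lemma key_ineq {z w : ℂ} (hz : ‖z‖ < 1) (hw : ‖w‖ < 1)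
    {C : ℝ} (hk : kD z w ≤ C) :
    ‖w - 1‖ ≤ Real.exp (2 * C) * ‖z - 1‖ := by
  set d := (1 : ℂ) - (starRingEnd ℂ) z * w with hd
  have hlt : ‖z - w‖ < ‖d‖ := pseudo_lt_one hz hw
  have hdpos : 0 < ‖d‖ := lt_of_le_of_lt (norm_nonneg _) hlt
  set r := ‖z - w‖ / ‖d‖ with hrdef
  have hr0 : 0 ≤ r := div_nonneg (norm_nonneg _) (norm_nonneg _)
  have hr1 : r < 1 := (div_lt_one hdpos).mpr hlt
  have hlog : Real.log ((1 + r) / (1 - r)) ≤ 2 * C := by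
    have h : artanh r ≤ C := hk
    unfold artanh at h; linarith
  have hratio_pos : 0 < (1 + r) / (1 - r) := div_pos (by linarith) (by linarith)
  have hM : (1 + r) / (1 - r) ≤ Real.exp (2 * C) := by
    rw [← Real.exp_log hratio_pos]; exact Real.exp_le_exp.mpr hlog
  set M := Real.exp (2 * C) with hMdef
  have hMul : 1 + r ≤ M * (1 - r) := by
    rw [div_le_iff₀ (by linarith)] at hM; linarith
  have hzw : ‖z - w‖ = r * ‖d‖ := by
    rw [hrdef]; field_simp
  have hconj : ‖1 - (starRingEnd ℂ) z‖ = ‖z - 1‖ := by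
    rw [show (1 : ℂ) - (starRingEnd ℂ) z = (starRingEnd ℂ) (1 - z) by simp [map_sub]]
    rw [Complex.norm_conj]
    exact norm_sub_rev 1 z
  have hd_le : ‖d‖ ≤ ‖z - 1‖ + ‖w - 1‖ := by
    have hsplit : d = (1 - (starRingEnd ℂ) z) + (starRingEnd ℂ) z * (1 - w) := by
      rw [hd]; ring
    calc ‖d‖ ≤ ‖1 - (starRingEnd ℂ) z‖
          + ‖(starRingEnd ℂ) z * (1 - w)‖ := by
            rw [hsplit]; exact norm_add_le _ _
      _ ≤ ‖z - 1‖ + ‖w - 1‖ := by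
            rw [hconj, norm_mul, Complex.norm_conj]
            have h1 : ‖1 - w‖ = ‖w - 1‖ := norm_sub_rev 1 w
            rw [h1]
            nlinarith [norm_nonneg (w - 1), hz]
  have htri : ‖w - 1‖ ≤ ‖z - 1‖ + ‖z - w‖ := by
    have h := norm_sub_le_norm_sub_add_norm_sub w z 1
    have h2 : ‖w - z‖ = ‖z - w‖ := norm_sub_rev w z
    linarith
  have hMpos : 0 < M := Real.exp_pos _
  nlinarith [norm_nonneg (z - 1), norm_nonneg (w - 1), hzw, hd_le, htri,
    mul_le_mul_of_nonneg_right hMul (norm_nonneg (z - 1))]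

theorem polydisc_first_coordinate_convergence {N : ℕ} [NeZero N]
    (F : (Fin N → ℂ) → (Fin N → ℂ))
    (hmaps : ∀ z : Fin N → ℂ, (∀ j, ‖z j‖ < 1) →
      ∀ j, ‖F z j‖ < 1)
    (hLip : ∀ z w : Fin N → ℂ, (∀ j, ‖z j‖ < 1) →
      (∀ j, ‖w j‖ < 1) → kPoly (F z) (F w) ≤ kPoly z w)
    (p q : Fin N → ℂ)
    (hp : ∀ j, ‖p j‖ < 1) (hq : ∀ j, ‖q j‖ < 1)
    (htend : Filter.Tendsto (fun n => (F^[n] p) 0) Filter.atTop (nhds (1 : ℂ))) :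
    Filter.Tendsto (fun n => (F^[n] q) 0) Filter.atTop (nhds (1 : ℂ)) := by
  set C := kPoly p q with hC
  have hiter : ∀ n, (∀ j, ‖F^[n] p j‖ < 1) ∧
      (∀ j, ‖F^[n] q j‖ < 1) ∧ kPoly (F^[n] p) (F^[n] q) ≤ C := by
    intro n
    induction n with
    | zero =>
      simp only [Function.iterate_zero_apply]
      exact ⟨hp, hq, le_refl _⟩
    | succ n ih =>
      rw [Function.iterate_succ_apply', Function.iterate_succ_apply']
      exact ⟨hmaps _ ih.1, hmaps _ ih.2.1, (hLip _ _ ih.1 ih.2.1).trans ih.2.2⟩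
  have hbound : ∀ n, ‖(F^[n] q) 0 - 1‖
      ≤ Real.exp (2 * C) * ‖(F^[n] p) 0 - 1‖ := by
    intro n
    have h4 : kD ((F^[n] p) 0) ((F^[n] q) 0) ≤ kPoly (F^[n] p) (F^[n] q) := by
      unfold kPoly
      exact Finset.le_sup' (fun j => kD (F^[n] p j) (F^[n] q j)) (Finset.mem_univ 0)
    have h3 : kD ((F^[n] p) 0) ((F^[n] q) 0) ≤ C := h4.trans (hiter n).2.2
    exact key_ineq ((hiter n).1 0) ((hiter n).2.1 0) h3
  have hz0 : Filter.Tendsto (fun n => ‖(F^[n] p) 0 - 1‖)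
      Filter.atTop (nhds 0) := by
    have := tendsto_iff_norm_sub_tendsto_zero.mp htend
    simpa using this
  have hw0 : Filter.Tendsto (fun n => ‖(F^[n] q) 0 - 1‖)
      Filter.atTop (nhds 0) := by
    refine squeeze_zero (fun n => norm_nonneg _) hbound ?_
    simpa using hz0.const_mul (Real.exp (2 * C))
  rw [tendsto_iff_norm_sub_tendsto_zero]
  simpa using hw0
end
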